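/- Let y ∈ ℝⁿ with |y| < 1, and let W be the 2-dimensional vector field W(x) = -(1/2)·((1-2⟨x,y⟩+|y|²)/|x-y|² - 1)·(x-y) + (1/2)·log((1-2⟨x,y⟩+|y|²)/|x-y|²)·y. Then |x-y| · (W(x) + (1-|y|²)·(x-y)/(2·|x-y|²)) → 0 as x → y. -/

import Mathlib

open scoped InnerProductSpace Topology

theorem stmt_7 (n : ℕ) (y : EuclideanSpace ℝ (Fin n)) (hy : ‖y‖ < 1)
    (W : EuclideanSpace ℝ (Fin n) → EuclideanSpace ℝ (Fin n))
    (hW : ∀ x, W x =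
      (-(1 / 2 : ℝ) * ((1 - 2 * ⟪x, y⟫_ℝ + ‖y‖ ^ 2) / ‖x - y‖ ^ 2 - 1)) • (x - y)
      + ((1 / 2 : ℝ) * Real.log ((1 - 2 * ⟪x, y⟫_ℝ + ‖y‖ ^ 2) / ‖x - y‖ ^ 2)) • y) :
    Filter.Tendsto
      (fun x => ‖x - y‖ •
        (W x + ((1 - ‖y‖ ^ 2) / (2 * ‖x - y‖ ^ 2)) • (x - y)))
      (𝓝[≠] y) (𝓝 0) := by
  have hy2 : (0:ℝ) < 1 - ‖y‖ ^ 2 := by nlinarith [norm_nonneg y]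
  set A : EuclideanSpace ℝ (Fin n) → ℝ := fun x => 1 - 2 * ⟪x, y⟫_ℝ + ‖y‖ ^ 2 with hAdef
  have hAcont : Continuous A := by
    apply Continuous.add
    · exact continuous_const.sub ((continuous_const.mul
        (continuous_id.inner continuous_const)))
    · exact continuous_const
  have hAy : A y = 1 - ‖y‖ ^ 2 := by
    simp only [hAdef, real_inner_self_eq_norm_sq]; ring
  have hAy' : Filter.Tendsto A (𝓝[≠] y) (𝓝 (1 - ‖y‖ ^ 2)) := by
    have := hAcont.tendsto y
    rw [hAy] at this
    exact this.mono_left nhdsWithin_le_nhds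
  have hApos : ∀ᶠ x in 𝓝[≠] y, 0 < A x :=
    hAy' (Ioi_mem_nhds hy2)
  -- r tends to 0 within positives
  have hr0 : Filter.Tendsto (fun x : EuclideanSpace ℝ (Fin n) => ‖x - y‖) (𝓝[≠] y) (𝓝 0) := by
    have : Filter.Tendsto (fun x : EuclideanSpace ℝ (Fin n) => ‖x - y‖) (𝓝 y) (𝓝 ‖y - y‖) :=
      ((continuous_id.sub continuous_const).norm.tendsto y)
    simpa using this.mono_left nhdsWithin_le_nhds
  have hrpos : ∀ᶠ x in 𝓝[≠] y, 0 < ‖x - y‖ := by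
    filter_upwards [self_mem_nhdsWithin] with x hx
    exact norm_pos_iff.mpr (sub_ne_zero.mpr hx)
  have hrP : Filter.Tendsto (fun x : EuclideanSpace ℝ (Fin n) => ‖x - y‖) (𝓝[≠] y) (𝓝[>] 0) :=
    tendsto_nhdsWithin_iff.mpr ⟨hr0, hrpos⟩
  -- the two pieces
  set g1 : EuclideanSpace ℝ (Fin n) → EuclideanSpace ℝ (Fin n) :=
    fun x => ((‖x‖ ^ 2 - ‖y‖ ^ 2) / (2 * ‖x - y‖)) • (x - y) with hg1
  set g2 : EuclideanSpace ℝ (Fin n) → EuclideanSpace ℝ (Fin n) :=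
    fun x => ((1/2 : ℝ) * (‖x - y‖ * Real.log (A x)) - ‖x - y‖ * Real.log ‖x - y‖) • y with hg2
  have hg1t : Filter.Tendsto g1 (𝓝[≠] y) (𝓝 0) := by
    apply squeeze_zero_norm' (a := fun x => |‖x‖ ^ 2 - ‖y‖ ^ 2| / 2)
    · filter_upwards [hrpos] with x hx
      have : ‖g1 x‖ = |‖x‖ ^ 2 - ‖y‖ ^ 2| / 2 := by
        rw [hg1, norm_smul, Real.norm_eq_abs, abs_div,
          abs_of_pos (by positivity : (0:ℝ) < 2 * ‖x - y‖)]
        field_simp [ne_of_gt hx]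
      rw [this]
    · have : Filter.Tendsto (fun x : EuclideanSpace ℝ (Fin n) => |‖x‖ ^ 2 - ‖y‖ ^ 2| / 2)
          (𝓝 y) (𝓝 (|‖y‖ ^ 2 - ‖y‖ ^ 2| / 2)) :=
        ((((continuous_norm.pow 2).sub continuous_const).abs).div_const 2).tendsto y
      simpa using this.mono_left nhdsWithin_le_nhds
  have hg2t : Filter.Tendsto g2 (𝓝[≠] y) (𝓝 0) := by
    have h1 : Filter.Tendsto (fun x : EuclideanSpace ℝ (Fin n) => ‖x - y‖ * Real.log (A x))
        (𝓝[≠] y) (𝓝 (0 * Real.log (1 - ‖y‖ ^ 2))) := by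
      exact hr0.mul ((Real.continuousAt_log (ne_of_gt hy2)).tendsto.comp hAy')
    have h2 : Filter.Tendsto (fun x : EuclideanSpace ℝ (Fin n) => ‖x - y‖ * Real.log ‖x - y‖)
        (𝓝[≠] y) (𝓝 0) := by
      have hb : Filter.Tendsto (fun t : ℝ => Real.log t * t) (𝓝[>] 0) (𝓝 0) := by
        simpa only [Real.rpow_one] using tendsto_log_mul_rpow_nhdsGT_zero zero_lt_one
      have := hb.comp hrP
      simpa [Function.comp_def, mul_comm] using this
    have : Filter.Tendsto (fun x : EuclideanSpace ℝ (Fin n) =>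
        (1/2 : ℝ) * (‖x - y‖ * Real.log (A x)) - ‖x - y‖ * Real.log ‖x - y‖)
        (𝓝[≠] y) (𝓝 ((1/2 : ℝ) * (0 * Real.log (1 - ‖y‖ ^ 2)) - 0)) :=
      (Filter.Tendsto.const_mul _ h1).sub h2
    simpa only [hg2, zero_mul, mul_zero, sub_zero, zero_smul] using this.smul_const y
  have := hg1t.add hg2t
  rw [add_zero] at this
  apply this.congr'
  filter_upwards [hApos, hrpos] with x hAx hrx
  have hxne : ‖x - y‖ ≠ 0 := ne_of_gt hrx
  have hnorm : ‖x - y‖ ^ 2 = ‖x‖ ^ 2 - 2 * ⟪x, y⟫_ℝ + ‖y‖ ^ 2 := by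
    rw [@norm_sub_sq_real]
  have hlog : Real.log (A x / ‖x - y‖ ^ 2) = Real.log (A x) - 2 * Real.log ‖x - y‖ := by
    rw [Real.log_div (ne_of_gt hAx) (by positivity), Real.log_pow]
    norm_num
  rw [hg1, hg2, hW x, smul_add, smul_add, smul_smul, smul_smul, smul_smul, add_right_comm,
    ← add_smul]
  have hA' : A x = ‖x - y‖ ^ 2 + (1 - ‖x‖ ^ 2) := by
    simp only [hAdef]; rw [hnorm]; ring
  have hs1 : (‖x‖ ^ 2 - ‖y‖ ^ 2) / (2 * ‖x - y‖)
      = ‖x - y‖ * (-(1 / 2) * ((1 - 2 * ⟪x, y⟫_ℝ + ‖y‖ ^ 2) / ‖x - y‖ ^ 2 - 1))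
        + ‖x - y‖ * ((1 - ‖y‖ ^ 2) / (2 * ‖x - y‖ ^ 2)) := by
    rw [show (1 - 2 * ⟪x, y⟫_ℝ + ‖y‖ ^ 2) = A x from rfl, hA']
    field_simp
    ring
  have hs2 : (1 / 2 : ℝ) * (‖x - y‖ * Real.log (A x)) - ‖x - y‖ * Real.log ‖x - y‖
      = ‖x - y‖ * (1 / 2 * Real.log ((1 - 2 * ⟪x, y⟫_ℝ + ‖y‖ ^ 2) / ‖x - y‖ ^ 2)) := by
    rw [show (1 - 2 * ⟪x, y⟫_ℝ + ‖y‖ ^ 2) = A x from rfl, hlog]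
    ring
  simp only [hs1, hs2]
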